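/- For any rule f and any nonempty position P, ord_f(P^T) = ord_f P, where P^T is the conjugate partition of P. -/

import Mathlib

/-- A position: a nonincreasing list of positive naturals (trailing zeros removed). -/
def IsPos (P : List ℕ) : Prop := P.Pairwise (· ≥ ·) ∧ ∀ a ∈ P, 0 < a

/-- The result of chomping position `P`, keeping the first `x` entries and
truncating all later entries to at most `a` (then removing zeros). -/
def chompAt (P : List ℕ) (x a : ℕ) : List ℕ :=
  (P.take x ++ (P.drop x).map (fun b => min b a)).filter (fun b => 0 < b)

/-- A chomp move from `P` to `Q`. -/
def ChompMove (P Q : List ℕ) : Prop :=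
  ∃ x a : ℕ, x < P.length ∧ Q = chompAt P x a ∧ Q ≠ P

/-- `ord` is an ordinal assignment for the `n`-player rule `α` (with scores
`α 1, ..., α n`): `ord [] = 0`, ordinals of nonempty positions lie in `[1, n]`,
and `α (ord P)` is the maximum of `α (ord Q + 1)` over moves `P → Q` with `ord Q ≠ n`. -/
structure IsOrd (n : ℕ) (α : ℕ → ℝ) (ord : List ℕ → ℕ) : Prop where
  ord_empty : ord [] = 0
  ord_mem : ∀ P, IsPos P → P ≠ [] → 1 ≤ ord P ∧ ord P ≤ n
  exists_best : ∀ P, IsPos P → P ≠ [] →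
    ∃ Q, ChompMove P Q ∧ ord Q ≠ n ∧ ord P = ord Q + 1
  le_best : ∀ P, IsPos P → P ≠ [] → ∀ Q, ChompMove P Q → ord Q ≠ n →
    α (ord Q + 1) ≤ α (ord P)

/-- The conjugate (transposed) partition: `(transpose P)_i = #{j : P_j ≥ i+1}`. -/
def transpose (P : List ℕ) : List ℕ :=
  (List.range P.headI).map (fun i => P.countP (fun a => i + 1 ≤ a))

lemma ext_getD : ∀ {P Q : List ℕ}, (∀ a ∈ P, 0 < a) → (∀ a ∈ Q, 0 < a) →
    (∀ r, P.getD r 0 = Q.getD r 0) → P = Q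
  | [], [], _, _, _ => rfl
  | [], b :: Q, _, hQ, h => by
    have := h 0; simp only [List.getD_nil, List.getD_cons_zero] at this
    exact absurd this.symm (hQ b (by simp)).ne'
  | a :: P, [], hP, _, h => by
    have := h 0; simp only [List.getD_nil, List.getD_cons_zero] at this
    exact absurd this (hP a (by simp)).ne'
  | a :: P, b :: Q, hP, hQ, h => by
    have h0 := h 0
    simp only [List.getD_cons_zero] at h0
    have := ext_getD (fun x hx => hP x (by simp [hx])) (fun x hx => hQ x (by simp [hx]))
      (fun r => h (r + 1))
    rw [h0, this]

lemma count_lt_iff : ∀ {P : List ℕ}, P.Pairwise (· ≥ ·) → ∀ r k : ℕ,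
    (r < P.countP (fun a => decide (k + 1 ≤ a)) ↔ k + 1 ≤ P.getD r 0)
  | [], _, r, k => by simp
  | b :: P, hs, r, k => by
    have hs' : P.Pairwise (· ≥ ·) := hs.of_cons
    have hb : ∀ a ∈ P, a ≤ b := fun a ha => List.rel_of_pairwise_cons hs ha
    rw [List.countP_cons]
    by_cases hkb : k + 1 ≤ b
    · have hd : (decide (k+1 ≤ b) = true) := by simpa using hkb
      rw [hd, if_pos rfl]
      cases r with
      | zero => simp [hkb]
      | succ r =>
        simp only [List.getD_cons_succ]
        have := count_lt_iff hs' r k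
        omega
    · have hd : (decide (k+1 ≤ b) = false) := by simpa using hkb
      rw [hd]
      have hc : P.countP (fun a => decide (k + 1 ≤ a)) = 0 := by
        rw [List.countP_eq_zero]
        intro a ha
        simp only [decide_eq_true_eq]
        have := hb a ha; omega
      cases r with
      | zero => simp only [List.getD_cons_zero, hc, Bool.false_eq_true, if_false]; omega
      | succ r =>
        simp only [List.getD_cons_succ, hc, Bool.false_eq_true, if_false]
        constructor
        · intro h; omega
        · intro h
          exfalso
          rcases Nat.lt_or_ge r P.length with hr | hr
          · have : P.getD r 0 ≤ b := by
              rw [List.getD_eq_getElem _ _ hr]; exact hb _ (List.getElem_mem hr)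
            omega
          · rw [List.getD_eq_default _ _ hr] at h; omega

lemma length_transpose (P : List ℕ) : (transpose P).length = P.headI := by
  simp [transpose]

lemma getD_transpose {P : List ℕ} {c : ℕ} (hc : c < P.headI) :
    (transpose P).getD c 0 = P.countP (fun a => decide (c + 1 ≤ a)) := by
  rw [List.getD_eq_getElem _ _ (by simpa [transpose] using hc)]
  simp [transpose]

lemma getD_le_headI {P : List ℕ} (hs : P.Pairwise (· ≥ ·)) (r : ℕ) :
    P.getD r 0 ≤ P.headI := by
  cases P with
  | nil => simp
  | cons b t =>
    cases r with
    | zero => simp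
    | succ r =>
      simp only [List.getD_cons_succ, List.headI_cons]
      rcases Nat.lt_or_ge r t.length with hr | hr
      · rw [List.getD_eq_getElem _ _ hr]
        exact List.rel_of_pairwise_cons hs (List.getElem_mem hr)
      · rw [List.getD_eq_default _ _ hr]; omega

lemma cell_transpose {P : List ℕ} (hP : IsPos P) (r c : ℕ) :
    r < (transpose P).getD c 0 ↔ c < P.getD r 0 := by
  rcases Nat.lt_or_ge c P.headI with hc | hc
  · rw [getD_transpose hc, count_lt_iff hP.1]
    omega
  · rw [List.getD_eq_default _ _ (by rwa [length_transpose])]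
    have := getD_le_headI hP.1 r
    constructor
    · omega
    · omega

lemma isPos_transpose {P : List ℕ} (hP : IsPos P) : IsPos (transpose P) := by
  constructor
  · unfold transpose
    refine List.Pairwise.map _ ?_ List.pairwise_lt_range
    intro i j hij
    exact List.countP_mono_left (fun a ha h => by simp at h ⊢; omega)
  · intro a ha
    simp only [transpose, List.mem_map, List.mem_range] at ha
    obtain ⟨i, hi, rfl⟩ := ha
    have hne : P ≠ [] := by
      intro h; rw [h] at hi; simp at hi
    have := (count_lt_iff hP.1 0 i).mpr (by
      cases P with
      | nil => simp at hne
      | cons b t => simpa using hi)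
    omega

lemma transpose_transpose {P : List ℕ} (hP : IsPos P) : transpose (transpose P) = P := by
  apply ext_getD (isPos_transpose (isPos_transpose hP)).2 hP.2
  intro r
  have key : ∀ c, c < (transpose (transpose P)).getD r 0 ↔ c < P.getD r 0 := by
    intro c
    rw [cell_transpose (isPos_transpose hP), cell_transpose hP]
  have h1 := key ((transpose (transpose P)).getD r 0)
  have h2 := key (P.getD r 0)
  omega


lemma chompAt_zero {P : List ℕ} (hP : IsPos P) (x : ℕ) : chompAt P x 0 = P.take x := by
  unfold chompAt
  rw [List.filter_append]
  have h1 : (P.take x).filter (fun b => 0 < b) = P.take x :=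
    List.filter_eq_self.mpr (fun b hb => by
      simpa using hP.2 b (List.mem_of_mem_take hb))
  have h2 : ((P.drop x).map (fun b => min b 0)).filter (fun b => 0 < b) = [] := by
    rw [List.filter_eq_nil_iff]
    intro b hb
    simp only [List.mem_map] at hb
    obtain ⟨c, _, rfl⟩ := hb
    simp
  rw [h1, h2, List.append_nil]

lemma chompAt_pos {P : List ℕ} (hP : IsPos P) (x : ℕ) {a : ℕ} (ha : 0 < a) :
    chompAt P x a = P.take x ++ (P.drop x).map (fun b => min b a) := by
  unfold chompAt
  apply List.filter_eq_self.mpr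
  intro b hb
  rw [List.mem_append] at hb
  rcases hb with hb | hb
  · simpa using hP.2 b (List.mem_of_mem_take hb)
  · simp only [List.mem_map] at hb
    obtain ⟨c, hc, rfl⟩ := hb
    have := hP.2 c (List.mem_of_mem_drop hc)
    simp; omega

lemma getD_take (P : List ℕ) (x r : ℕ) :
    (P.take x).getD r 0 = if r < x then P.getD r 0 else 0 := by
  split_ifs with h
  · rcases Nat.lt_or_ge r P.length with hr | hr
    · rw [List.getD_eq_getElem _ _ (by simp; omega), List.getD_eq_getElem _ _ hr,
        List.getElem_take]
    · rw [List.getD_eq_default _ _ (by simp; omega), List.getD_eq_default _ _ hr]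
  · exact List.getD_eq_default _ _ (by simp; omega)

lemma getD_chompAt {P : List ℕ} (hP : IsPos P) (x a r : ℕ) :
    (chompAt P x a).getD r 0 = if r < x then P.getD r 0 else min (P.getD r 0) a := by
  rcases Nat.eq_zero_or_pos a with rfl | ha
  · rw [chompAt_zero hP, getD_take]
    split_ifs <;> simp
  · rw [chompAt_pos hP x ha]
    have hlt : (P.take x).length = min x P.length := by simp
    split_ifs with h
    · rcases Nat.lt_or_ge r P.length with hr | hr
      · rw [List.getD_eq_getElem _ _ (by simp; omega)]
        rw [List.getElem_append_left (by simp; omega)]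
        rw [List.getElem_take, List.getD_eq_getElem _ _ hr]
      · rw [List.getD_eq_default _ _ (by simp; omega), List.getD_eq_default _ _ hr]
    · rcases Nat.lt_or_ge r P.length with hr | hr
      · have hx : x < P.length := by omega
        rw [List.getD_eq_getElem _ _ (by simp; omega)]
        rw [List.getElem_append_right (by simp; omega)]
        simp only [List.getElem_map, List.getElem_drop]
        rw [List.getD_eq_getElem _ _ hr]
        congr 2
        simp; omega
      · rw [List.getD_eq_default _ _ (by simp; omega), List.getD_eq_default _ _ hr]
        simp

lemma cell_chompAt {P : List ℕ} (hP : IsPos P) (x a r c : ℕ) :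
    c < (chompAt P x a).getD r 0 ↔ c < P.getD r 0 ∧ (r < x ∨ c < a) := by
  rw [getD_chompAt hP]
  split_ifs with h <;> omega

lemma isPos_chompAt {P : List ℕ} (hP : IsPos P) (x a : ℕ) : IsPos (chompAt P x a) := by
  constructor
  · rcases Nat.eq_zero_or_pos a with rfl | ha
    · rw [chompAt_zero hP]
      exact hP.1.sublist (List.take_sublist _ _)
    · rw [chompAt_pos hP x ha]
      rw [List.pairwise_append]
      have hPP := hP.1
      conv at hPP => rw [← List.take_append_drop x P]
      rw [List.pairwise_append] at hPP
      refine ⟨hPP.1, ?_, ?_⟩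
      · exact hPP.2.1.map _ (fun hbc => by simp at hbc ⊢; omega)
      · intro u hu v hv
        simp only [List.mem_map] at hv
        obtain ⟨b, hb, rfl⟩ := hv
        have := hPP.2.2 u hu b hb
        simp at this ⊢; omega
  · intro b hb
    unfold chompAt at hb
    rw [List.mem_filter] at hb
    simpa using hb.2

lemma transpose_chompAt {P : List ℕ} (hP : IsPos P) (x a : ℕ) :
    transpose (chompAt P x a) = chompAt (transpose P) a x := by
  apply ext_getD (isPos_transpose (isPos_chompAt hP x a)).2
    (isPos_chompAt (isPos_transpose hP) a x).2
  intro r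
  have key : ∀ c, c < (transpose (chompAt P x a)).getD r 0 ↔
      c < (chompAt (transpose P) a x).getD r 0 := by
    intro c
    rw [cell_transpose (isPos_chompAt hP x a), cell_chompAt hP,
      cell_chompAt (isPos_transpose hP), ← cell_transpose hP c r]
    tauto
  have h1 := key ((transpose (chompAt P x a)).getD r 0)
  have h2 := key ((chompAt (transpose P) a x).getD r 0)
  omega

lemma chompAt_eq_self {P : List ℕ} (hP : IsPos P) (x : ℕ) {a : ℕ} (ha : P.headI ≤ a) :
    chompAt P x a = P := by
  apply ext_getD (isPos_chompAt hP x a).2 hP.2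
  intro r
  rw [getD_chompAt hP]
  have := getD_le_headI hP.1 r
  split_ifs <;> omega

lemma headI_pos {P : List ℕ} (hP : IsPos P) (hne : P ≠ []) : 0 < P.headI := by
  cases P with
  | nil => exact absurd rfl hne
  | cons b t => exact hP.2 b (by simp)

lemma chompMove_transpose {P Q : List ℕ} (hP : IsPos P) (hQ : IsPos Q)
    (h : ChompMove P Q) : ChompMove (transpose P) (transpose Q) := by
  obtain ⟨x, a, hx, rfl, hne⟩ := h
  have ha : a < P.headI := by
    by_contra hc
    push_neg at hc
    exact hne (chompAt_eq_self hP x hc)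
  refine ⟨a, x, by rwa [length_transpose], transpose_chompAt hP x a, ?_⟩
  intro hc
  apply hne
  rw [← transpose_transpose hQ, hc, transpose_transpose hP]

lemma min_map_sum (a : ℕ) : ∀ l : List ℕ,
    ((l.map fun b => min b a).sum < l.sum) ∨ (l.map fun b => min b a) = l
  | [] => Or.inr rfl
  | b :: t => by
    rcases min_map_sum a t with h | h
    · left; simp only [List.map_cons, List.sum_cons]
      have : min b a ≤ b := min_le_left _ _
      omega
    · rcases Nat.lt_or_ge a b with hab | hab
      · left
        simp only [List.map_cons, List.sum_cons, h]
        have hsum : (t.map fun b => min b a).sum = t.sum := by rw [h]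
        omega
      · right
        simp only [List.map_cons, h]
        rw [min_eq_left hab]

lemma sum_lt_of_move {P Q : List ℕ} (hP : IsPos P) (h : ChompMove P Q) :
    Q.sum < P.sum := by
  obtain ⟨x, a, hx, rfl, hne⟩ := h
  have hsplit : (P.take x).sum + (P.drop x).sum = P.sum := by
    rw [← List.sum_append, List.take_append_drop]
  have hdrop_ne : P.drop x ≠ [] := by
    intro hc
    have := congrArg List.length hc
    simp at this; omega
  have hdrop_pos : 0 < (P.drop x).sum :=
    List.sum_pos _ (fun b hb => hP.2 b (List.mem_of_mem_drop hb)) hdrop_ne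
  rcases Nat.eq_zero_or_pos a with rfl | ha
  · rw [chompAt_zero hP]
    omega
  · rw [chompAt_pos hP x ha]
    rw [List.sum_append]
    rcases min_map_sum a (P.drop x) with hlt | heq
    · omega
    · exfalso
      apply hne
      rw [chompAt_pos hP x ha, heq, List.take_append_drop]

lemma sum_ite_range (b : ℕ) : ∀ N : ℕ, b ≤ N →
    (∑ i ∈ Finset.range N, if i + 1 ≤ b then 1 else 0) = b
  | 0, h => by simp; omega
  | N + 1, h => by
    rw [Finset.sum_range_succ]
    rcases Nat.lt_or_ge N b with hNb | hNb
    · have hb : b = N + 1 := by omega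
      subst hb
      rw [if_pos (by omega)]
      have : (∑ i ∈ Finset.range N, if i + 1 ≤ N + 1 then 1 else 0)
          = ∑ _i ∈ Finset.range N, 1 :=
        Finset.sum_congr rfl (fun i hi => if_pos (by simp at hi; omega))
      rw [this, Finset.sum_const, smul_eq_mul, mul_one, Finset.card_range]
    · rw [if_neg (by omega), sum_ite_range b N hNb]
      omega

lemma sum_count_eq : ∀ (l : List ℕ) (N : ℕ), (∀ a ∈ l, a ≤ N) →
    (∑ i ∈ Finset.range N, l.countP (fun a => decide (i + 1 ≤ a))) = l.sum
  | [], N, _ => by simp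
  | b :: t, N, h => by
    have hb : b ≤ N := h b (by simp)
    have ht : ∀ a ∈ t, a ≤ N := fun a ha => h a (by simp [ha])
    simp only [List.countP_cons, List.sum_cons]
    rw [Finset.sum_add_distrib, sum_count_eq t N ht]
    have : (∑ i ∈ Finset.range N,
        if (fun a => decide (i + 1 ≤ a)) b = true then 1 else 0)
        = ∑ i ∈ Finset.range N, if i + 1 ≤ b then 1 else 0 :=
      Finset.sum_congr rfl (fun i _ => by simp)
    rw [this, sum_ite_range b N hb]
    omega

lemma sum_transpose {P : List ℕ} (hP : IsPos P) : (transpose P).sum = P.sum := by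
  have : (transpose P).sum = ∑ i ∈ Finset.range P.headI,
      P.countP (fun a => decide (i + 1 ≤ a)) := rfl
  rw [this]
  apply sum_count_eq
  intro a ha
  cases P with
  | nil => simp at ha
  | cons b t =>
    simp only [List.headI_cons]
    rcases List.mem_cons.mp ha with rfl | ha
    · exact le_refl a
    · exact List.rel_of_pairwise_cons hP.1 ha

/-- the ordinal of a position is invariant under transposition. -/
theorem ord_transpose (n : ℕ) (hn : 2 ≤ n) (α : ℕ → ℝ)
    (hα : Set.InjOn α (Set.Icc 1 n)) (ord : List ℕ → ℕ) (hord : IsOrd n α ord)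
    (P : List ℕ) (hP : IsPos P) (hne : P ≠ []) :
    ord (transpose P) = ord P := by
  suffices H : ∀ s P, IsPos P → P ≠ [] → P.sum ≤ s → ord (transpose P) = ord P from
    H P.sum P hP hne le_rfl
  clear hP hne P
  intro s
  induction s with
  | zero =>
    intro P hP hne hs
    have := List.sum_pos P hP.2 hne
    omega
  | succ s ih =>
    intro P hP hne hs
    have hPT := isPos_transpose hP
    have hTne : transpose P ≠ [] := by
      intro h
      have hl := congrArg List.length h
      rw [length_transpose] at hl
      simp only [List.length_nil] at hl
      exact absurd hl (headI_pos hP hne).ne'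
    have hTT := transpose_transpose hP
    have haux : ∀ Q, IsPos Q → Q.sum ≤ s → ord (transpose Q) = ord Q := by
      intro Q hQ hQs
      rcases eq_or_ne Q [] with rfl | hQne
      · rfl
      · exact ih Q hQ hQne hQs
    obtain ⟨Q, hmv, hQn, hPQ⟩ := hord.exists_best P hP hne
    have hQpos : IsPos Q := by obtain ⟨x, a, _, rfl, _⟩ := hmv; exact isPos_chompAt hP x a
    have hQs : Q.sum ≤ s := by have := sum_lt_of_move hP hmv; omega
    have h1 : ord (transpose Q) = ord Q := haux Q hQpos hQs
    have hmvT := chompMove_transpose hP hQpos hmv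
    have lb1 := hord.le_best (transpose P) hPT hTne (transpose Q) hmvT (by rw [h1]; exact hQn)
    rw [h1, ← hPQ] at lb1
    obtain ⟨R, hmvR, hRn, hPTR⟩ := hord.exists_best (transpose P) hPT hTne
    have hRpos : IsPos R := by obtain ⟨x, a, _, rfl, _⟩ := hmvR; exact isPos_chompAt hPT x a
    have hRs : R.sum ≤ s := by
      have h := sum_lt_of_move hPT hmvR
      rw [sum_transpose hP] at h; omega
    have h2 : ord (transpose R) = ord R := haux R hRpos hRs
    have hmvR' : ChompMove P (transpose R) := by
      have := chompMove_transpose hPT hRpos hmvR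
      rwa [hTT] at this
    have lb2 := hord.le_best P hP hne (transpose R) hmvR' (by rw [h2]; exact hRn)
    rw [h2, ← hPTR] at lb2
    have heq : α (ord (transpose P)) = α (ord P) := le_antisymm lb2 lb1
    have m1 := hord.ord_mem P hP hne
    have m2 := hord.ord_mem (transpose P) hPT hTne
    exact hα ⟨m2.1, m2.2⟩ ⟨m1.1, m1.2⟩ heq
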